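/- Let τ be an infinite cardinal and let {X_α : α ∈ Λ} be a family of nonempty Hausdorff spaces with i-weight iw(X_α) ≤ τ for each α ∈ Λ and |Λ| = 2^τ. Then for every subset S of the topological sum X = ⊕{X_α : α ∈ Λ} with |S| < 2^τ, the subspace X \ S admits a condensation onto the Tychonoff cube [0,1]^τ; in particular X is a_{<2^τ}-subcompact. -/

import Mathlib

open Cardinal Topology

universe u

/-- A Hausdorff space is *subcompact* if it admits a condensation (continuous bijection)
onto a compact Hausdorff space. -/
def Subcompact (X : Type u) [TopologicalSpace X] : Prop :=
  ∃ (Y : Type u) (_ : TopologicalSpace Y), CompactSpace Y ∧ T2Space Y ∧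
    ∃ f : X → Y, Continuous f ∧ Function.Bijective f

/-- A compact Hausdorff space `X` is an `a_τ`-space if for every `C ⊆ X` with `#C ≤ τ`
there is a condensation from the subspace `X \ C` onto a compact Hausdorff space. -/
def ATauSpace (τ : Cardinal.{u}) (X : Type u) [TopologicalSpace X] : Prop :=
  CompactSpace X ∧ T2Space X ∧ ∀ C : Set X, #C ≤ τ → Subcompact ↥(Cᶜ)

/-- A compact Hausdorff space `X` is a strictly `a_τ`-space if for every `C ⊆ X` with
`#C ≤ τ` there is a condensation from `X \ C` onto a compact Hausdorff space `K`
extending to a continuous map `X → K` (encoded: a continuous `g : X → K` whose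
restriction to `X \ C` is bijective). -/
def StrictATauSpace (τ : Cardinal.{u}) (X : Type u) [TopologicalSpace X] : Prop :=
  CompactSpace X ∧ T2Space X ∧ ∀ C : Set X, #C ≤ τ →
    ∃ (K : Type u) (_ : TopologicalSpace K), CompactSpace K ∧ T2Space K ∧
      ∃ g : X → K, Continuous g ∧ Function.Bijective fun x : ↥(Cᶜ) => g x

/-- A Hausdorff space `X` is `a_τ`-subcompact if for every `C ⊆ X` with `#C ≤ τ` there
is a condensation from `X \ C` onto an `a_τ`-space. -/
def ATauSubcompact (τ : Cardinal.{u}) (X : Type u) [TopologicalSpace X] : Prop :=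
  ∀ C : Set X, #C ≤ τ →
    ∃ (Y : Type u) (_ : TopologicalSpace Y), ATauSpace τ Y ∧
      ∃ f : ↥(Cᶜ) → Y, Continuous f ∧ Function.Bijective f

/-- A Hausdorff space `X` is strictly `a_τ`-subcompact if for every `C ⊆ X` with `#C ≤ τ`
there is a condensation from `X \ C` onto a strictly `a_τ`-space `Y` extending to a
continuous map `X → Y`. -/
def StrictATauSubcompact (τ : Cardinal.{u}) (X : Type u) [TopologicalSpace X] : Prop :=
  ∀ C : Set X, #C ≤ τ →
    ∃ (Y : Type u) (_ : TopologicalSpace Y), StrictATauSpace τ Y ∧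
      ∃ g : X → Y, Continuous g ∧ Function.Bijective fun x : ↥(Cᶜ) => g x

/-- A Hausdorff space `X` is almost strictly `a_τ`-subcompact if for every `C ⊆ X` with
`#C ≤ τ` there is a condensation from `X \ C` onto a compact Hausdorff space `Y`
extending to a continuous map `X → Y`. -/
def AlmostStrictATauSubcompact (τ : Cardinal.{u}) (X : Type u) [TopologicalSpace X] : Prop :=
  ∀ C : Set X, #C ≤ τ →
    ∃ (Y : Type u) (_ : TopologicalSpace Y), CompactSpace Y ∧ T2Space Y ∧
      ∃ g : X → Y, Continuous g ∧ Function.Bijective fun x : ↥(Cᶜ) => g x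


namespace Stmt11

open Set TopologicalSpace

/-- The unit interval as a subtype of `ℝ`. -/
abbrev II : Type := ↥(Set.Icc (0 : ℝ) 1)

namespace II

theorem nonneg (a : II) : 0 ≤ a.1 := a.2.1
theorem le_one (a : II) : a.1 ≤ 1 := a.2.2

end II

/-! ### The affine operation `opR` -/

/-- Signed slope used by `opR`. -/
noncomputable def slopeR (c : ℝ) : ℝ := if c ≤ 1/2 then 1 - c else -c

/-- `opR c s = c + s * slopeR c`; an affine injection in `s` keeping values in `[0,1]`. -/
noncomputable def opR (c s : ℝ) : ℝ := c + s * slopeR c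

theorem slopeR_ne_zero {c : ℝ} (hc : c ∈ Set.Icc (0:ℝ) 1) : slopeR c ≠ 0 := by
  unfold slopeR
  split_ifs with h
  · nlinarith [hc.1, hc.2]
  · push_neg at h; nlinarith [hc.1, hc.2]

theorem opR_zero (c : ℝ) : opR c 0 = c := by simp [opR]

theorem opR_mem {c s : ℝ} (hc : c ∈ Set.Icc (0:ℝ) 1) (hs : s ∈ Set.Icc (0:ℝ) 1) :
    opR c s ∈ Set.Icc (0:ℝ) 1 := by
  unfold opR slopeR
  obtain ⟨hc0, hc1⟩ := hc
  obtain ⟨hs0, hs1⟩ := hs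
  split_ifs with h
  · constructor <;> nlinarith
  · push_neg at h
    constructor <;> nlinarith

theorem opR_injOn {c : ℝ} (hc : c ∈ Set.Icc (0:ℝ) 1) {s s' : ℝ}
    (h : opR c s = opR c s') : s = s' := by
  unfold opR at h
  have hs := slopeR_ne_zero hc
  have : s * slopeR c = s' * slopeR c := by linarith
  exact mul_right_cancel₀ hs this

theorem continuous_opR_right (c : ℝ) : Continuous fun s => opR c s := by
  unfold opR; fun_prop

/-! ### distance and positive part on `II` -/

noncomputable def dI (a b : II) : ℝ := |a.1 - b.1|

noncomputable def pI (a b : II) : ℝ := max (a.1 - b.1) 0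

theorem dI_mem (a b : II) : dI a b ∈ Set.Icc (0:ℝ) 1 := by
  unfold dI
  constructor
  · positivity
  · rw [abs_le]
    constructor <;> nlinarith [a.2.1, a.2.2, b.2.1, b.2.2]

theorem pI_mem (a b : II) : pI a b ∈ Set.Icc (0:ℝ) 1 := by
  unfold pI
  constructor
  · exact le_max_right _ _
  · apply max_le
    · nlinarith [a.2.1, a.2.2, b.2.1, b.2.2]
    · norm_num

theorem dI_self (a : II) : dI a a = 0 := by simp [dI]

theorem pI_self (a : II) : pI a a = 0 := by simp [pI]

theorem dI_eq_zero_iff {a b : II} : dI a b = 0 ↔ a = b := by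
  unfold dI
  rw [abs_eq_zero, sub_eq_zero]
  exact ⟨fun h => Subtype.ext h, fun h => by rw [h]⟩

/-- Two "distances" determine the point: from `|a-b| = |a'-b|` and
`(a-b)⁺ = (a'-b)⁺` we get `a = a'`. -/
theorem eq_of_dI_pI {a a' b : II} (h1 : dI a b = dI a' b) (h2 : pI a b = pI a' b) :
    a = a' := by
  apply Subtype.ext
  simp only [dI] at h1
  simp only [pI] at h2
  rcases le_or_gt (a.1 - b.1) 0 with h | h
  · rcases le_or_gt (a'.1 - b.1) 0 with h' | h'
    · -- both nonpositive: |·| determines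
      rw [abs_of_nonpos h, abs_of_nonpos h'] at h1
      linarith
    · -- a-b ≤ 0, a'-b > 0 : pI a b = 0, pI a' b = a'-b > 0 ⇒ contradiction unless 0
      rw [max_eq_right h] at h2
      rw [max_eq_left h'.le] at h2
      -- h2 : 0 = a' - b
      linarith
  · rw [max_eq_left h.le] at h2
    rcases le_or_gt (a'.1 - b.1) 0 with h' | h'
    · rw [max_eq_right h'] at h2
      linarith
    · rw [max_eq_left h'.le] at h2
      linarith

theorem continuous_dI_left (b : II) : Continuous fun a => dI a b := by
  unfold dI; fun_prop

theorem continuous_pI_left (b : II) : Continuous fun a => pI a b := by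
  unfold pI; fun_prop


def iZero : II := ⟨0, by norm_num⟩
def iOne : II := ⟨1, by norm_num⟩

/-! ### Spaces -/

section Spaces
variable (T : Type u)

/-- Cube on an index type. -/
abbrev Cube (A : Type u) : Type u := A → II

/-- Index for the "columns" cube: doubled coordinates. -/
abbrev ColIx : Type u := T × Bool

/-- Parameter index for wedge maps. -/
abbrev DIx : Type u := Finset T × Finset (Finset T)

/-- Index for the "heights" cube. -/
abbrev HIx : Type u := ColIx T × DIx T

abbrev Cols : Type u := Cube.{u} (ColIx T)
abbrev Heights : Type u := Cube.{u} (HIx T)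

/-- The master target space. -/
abbrev MM : Type u := Cols T × Heights T

theorem mul_mem_Icc01 {a b : ℝ} (ha : a ∈ Set.Icc (0:ℝ) 1) (hb : b ∈ Set.Icc (0:ℝ) 1) :
    a * b ∈ Set.Icc (0:ℝ) 1 := by
  constructor
  · exact mul_nonneg ha.1 hb.1
  · nlinarith [ha.1, ha.2, hb.1, hb.2]

/-- The doubling map: a continuous injection of the cube `T → II` into the columns cube,
sending the prescribed point `e` to the prescribed point `x₀`. -/
noncomputable def Fmap (e : Cube T) (x₀ : Cols T) (y : Cube T) : Cols T :=
  fun γ =>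
    ⟨opR (x₀ γ).1 (if γ.2 then pI (y γ.1) (e γ.1) else dI (y γ.1) (e γ.1)),
      by
        rcases γ with ⟨t, b⟩
        cases b
        · simpa using opR_mem (x₀ _).2 (dI_mem _ _)
        · simpa using opR_mem (x₀ _).2 (pI_mem _ _)⟩

theorem Fmap_basept (e : Cube T) (x₀ : Cols T) : Fmap T e x₀ e = x₀ := by
  funext γ
  apply Subtype.ext
  rcases γ with ⟨t, b⟩
  cases b <;> simp [Fmap, dI_self, pI_self, opR_zero]

theorem Fmap_injective (e : Cube T) (x₀ : Cols T) : Function.Injective (Fmap T e x₀) := by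
  intro y y' h
  funext t
  have h1 := congrFun h (t, false)
  have h2 := congrFun h (t, true)
  simp only [Fmap, Subtype.mk.injEq] at h1 h2
  exact eq_of_dI_pI (opR_injOn (x₀ (t, false)).2 h1) (opR_injOn (x₀ (t, true)).2 h2)

theorem Fmap_continuous (e : Cube T) (x₀ : Cols T) : Continuous (Fmap T e x₀) := by
  apply continuous_pi
  intro γ
  apply Continuous.subtype_mk
  apply (continuous_opR_right _).comp
  rcases γ with ⟨t, b⟩
  cases b
  · simp only [Bool.false_eq_true, if_false]
    exact (continuous_dI_left (e t)).comp (continuous_apply t)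
  · simp only [if_true]
    exact (continuous_pI_left (e t)).comp (continuous_apply t)

/-- The wedge map: continuous `Cols → Heights`, with `wedge x₀ v₀ u x₀ = v₀`. -/
noncomputable def wedge (x₀ : Cols T) (v₀ : Heights T) (uu : DIx T → II) (x : Cols T) :
    Heights T :=
  fun h =>
    ⟨opR (v₀ h).1 (dI (x h.1) (x₀ h.1) * (uu h.2).1),
      opR_mem (v₀ h).2 (mul_mem_Icc01 (dI_mem _ _) (uu h.2).2)⟩

theorem wedge_basept (x₀ : Cols T) (v₀ : Heights T) (uu : DIx T → II) :
    wedge T x₀ v₀ uu x₀ = v₀ := by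
  funext h
  apply Subtype.ext
  simp [wedge, dI_self, opR_zero]

theorem wedge_continuous (x₀ : Cols T) (v₀ : Heights T) (uu : DIx T → II) :
    Continuous (wedge T x₀ v₀ uu) := by
  apply continuous_pi
  intro h
  apply Continuous.subtype_mk
  apply (continuous_opR_right _).comp
  exact ((continuous_dI_left (x₀ h.1)).comp (continuous_apply h.1)).mul continuous_const

/-- The key algebraic extraction: if two wedge maps agree at a point `x` with
`x γ ≠ x₀ γ`, then the parameter `uu` lies in the span of two vectors determined
by the data of the two wedges (and `γ`) alone. -/
theorem wedge_eq_span {x₀ x₁ : Cols T} {v₀ v₁ : Heights T} {uu u₁ : DIx T → II}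
    {x : Cols T} (γ : ColIx T) (ha : dI (x γ) (x₀ γ) ≠ 0)
    (heq : wedge T x₀ v₀ uu x = wedge T x₁ v₁ u₁ x) :
    ∃ α β : ℝ, ∀ δ : DIx T,
      (uu δ).1 = α * (((v₁ (γ,δ)).1 - (v₀ (γ,δ)).1) / slopeR (v₀ (γ,δ)).1)
               + β * ((u₁ δ).1 * slopeR (v₁ (γ,δ)).1 / slopeR (v₀ (γ,δ)).1) := by
  set a := dI (x γ) (x₀ γ) with hadef
  set b := dI (x γ) (x₁ γ) with hbdef
  refine ⟨1 / a, b / a, fun δ => ?_⟩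
  have h := congrFun heq (γ, δ)
  simp only [wedge, Subtype.mk.injEq] at h
  -- h : opR (v₀ (γ,δ)).1 (a * uu δ) = opR (v₁ (γ,δ)).1 (b * u₁ δ)
  have hs₀ := slopeR_ne_zero (v₀ (γ,δ)).2
  unfold opR at h
  field_simp
  nlinarith [h, mul_self_nonneg a]

end Spaces

section Indep
variable (T : Type u)

/-- Member of the independent family indexed by `X : Set T`. -/
noncomputable def MX (X : Set T) : Set (DIx T) :=
  {d | @Finset.filter T (· ∈ X) (Classical.decPred _) d.1 ∈ d.2}

/-- Indicator of `MX X` with values in `II`. -/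
noncomputable def chi (X : Set T) (d : DIx T) : II :=
  @ite _ (d ∈ MX T X) (Classical.dec _) iOne iZero

theorem chi_pos {X : Set T} {d : DIx T} (h : d ∈ MX T X) : (chi T X d).1 = 1 := by
  simp only [chi, if_pos h, iOne]

theorem chi_neg {X : Set T} {d : DIx T} (h : d ∉ MX T X) : (chi T X d).1 = 0 := by
  simp only [chi, if_neg h, iZero]

/-- Private point: for distinct `X, Y, Z` there is a point in `MX X` missing
`MX Y` and `MX Z`. -/
theorem MX_private {X Y Z : Set T} (hXY : X ≠ Y) (hXZ : X ≠ Z) :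
    ∃ d, d ∈ MX T X ∧ d ∉ MX T Y ∧ d ∉ MX T Z := by
  classical
  have h1 : ∃ t, ¬(t ∈ X ↔ t ∈ Y) := by
    by_contra h
    push_neg at h
    exact hXY (Set.ext fun t => h t)
  have h2 : ∃ t, ¬(t ∈ X ↔ t ∈ Z) := by
    by_contra h
    push_neg at h
    exact hXZ (Set.ext fun t => h t)
  obtain ⟨t₁, ht₁⟩ := h1
  obtain ⟨t₂, ht₂⟩ := h2
  refine ⟨⟨{t₁, t₂}, {@Finset.filter T (· ∈ X) (Classical.decPred _) {t₁, t₂}}⟩, ?_, ?_, ?_⟩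
  · simp [MX]
  · simp only [MX, Set.mem_setOf_eq, Finset.mem_singleton]
    intro h
    have := Finset.ext_iff.mp h t₁
    simp only [Finset.mem_filter, Finset.mem_insert, Finset.mem_singleton] at this
    tauto
  · simp only [MX, Set.mem_setOf_eq, Finset.mem_singleton]
    intro h
    have := Finset.ext_iff.mp h t₂
    simp only [Finset.mem_filter, Finset.mem_insert, Finset.mem_singleton] at this
    tauto

/-- Any three vectors in `ℝ²` admit a nontrivial linear relation. -/
theorem three_dep (p q r : ℝ × ℝ) :
    ∃ c₁ c₂ c₃ : ℝ, ¬(c₁ = 0 ∧ c₂ = 0 ∧ c₃ = 0) ∧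
      c₁ * p.1 + c₂ * q.1 + c₃ * r.1 = 0 ∧ c₁ * p.2 + c₂ * q.2 + c₃ * r.2 = 0 := by
  by_cases hp : p = (0, 0)
  · exact ⟨1, 0, 0, by simp, by simp [hp], by simp [hp]⟩
  by_cases hdet : p.1 * q.2 - p.2 * q.1 = 0
  · -- q is a multiple of p
    by_cases hp1 : p.1 = 0
    · have hp2 : p.2 ≠ 0 := by
        intro hp2
        exact hp (Prod.ext hp1 hp2)
      refine ⟨q.2 / p.2, -1, 0, by intro h; simpa using h.2.1, ?_, ?_⟩
      · have hq1 : q.1 = 0 := by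
          rw [hp1] at hdet
          rcases mul_eq_zero.mp (by linarith : p.2 * q.1 = 0) with h | h
          · exact absurd h hp2
          · exact h
        simp [hp1, hq1]
      · field_simp
        ring
    · refine ⟨q.1 / p.1, -1, 0, by intro h; simpa using h.2.1, ?_, ?_⟩
      · field_simp
        ring
      · field_simp
        nlinarith [hdet]
  · -- genuine 2-dim case: Cramer
    refine ⟨(r.1 * q.2 - r.2 * q.1) / (p.1 * q.2 - p.2 * q.1),
            (p.1 * r.2 - p.2 * r.1) / (p.1 * q.2 - p.2 * q.1), -1, ?_, ?_, ?_⟩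
    · intro h
      simpa using h.2.2
    · field_simp
      have hd : q.2 * p.1 - q.1 * p.2 ≠ 0 := by intro h; apply hdet; linarith
      linear_combination r.1 * mul_inv_cancel₀ hd
    · field_simp
      have hd : q.2 * p.1 - q.1 * p.2 ≠ 0 := by intro h; apply hdet; linarith
      linear_combination r.2 * mul_inv_cancel₀ hd

/-- The span-counting core: no three distinct members of the family have indicators
in the span of two fixed vectors `A`, `B`. -/
theorem span_three {A B : DIx T → ℝ} {X Y Z : Set T}
    (hXY : X ≠ Y) (hXZ : X ≠ Z) (hYZ : Y ≠ Z)
    (hX : ∃ α β : ℝ, ∀ δ, (chi T X δ).1 = α * A δ + β * B δ)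
    (hY : ∃ α β : ℝ, ∀ δ, (chi T Y δ).1 = α * A δ + β * B δ)
    (hZ : ∃ α β : ℝ, ∀ δ, (chi T Z δ).1 = α * A δ + β * B δ) : False := by
  obtain ⟨α₁, β₁, h₁⟩ := hX
  obtain ⟨α₂, β₂, h₂⟩ := hY
  obtain ⟨α₃, β₃, h₃⟩ := hZ
  obtain ⟨c₁, c₂, c₃, hc, e1, e2⟩ := three_dep (α₁, β₁) (α₂, β₂) (α₃, β₃)
  simp only at e1 e2
  -- the combination of indicators vanishes identically
  have key : ∀ δ, c₁ * (chi T X δ).1 + c₂ * (chi T Y δ).1 + c₃ * (chi T Z δ).1 = 0 := by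
    intro δ
    rw [h₁ δ, h₂ δ, h₃ δ]
    linear_combination A δ * e1 + B δ * e2
  -- find which coefficient is nonzero and evaluate at the corresponding private point
  by_cases hc₁ : c₁ = 0
  · by_cases hc₂ : c₂ = 0
    · have hc₃ : c₃ ≠ 0 := fun h => hc ⟨hc₁, hc₂, h⟩
      obtain ⟨d, hd1, hd2, hd3⟩ := MX_private T (Ne.symm hXZ) (Ne.symm hYZ)
      have := key d
      rw [chi_pos T hd1, chi_neg T hd2, chi_neg T hd3] at this
      rw [hc₁, hc₂] at this
      simp at this
      exact hc₃ this
    · obtain ⟨d, hd1, hd2, hd3⟩ := MX_private T (Ne.symm hXY) hYZ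
      have := key d
      rw [chi_pos T hd1, chi_neg T hd2, chi_neg T hd3] at this
      rw [hc₁] at this
      simp at this
      exact hc₂ this
  · obtain ⟨d, hd1, hd2, hd3⟩ := MX_private T hXY hXZ
    have := key d
    rw [chi_pos T hd1, chi_neg T hd2, chi_neg T hd3] at this
    simp at this
    exact hc₁ this

end Indep

variable {τ : Cardinal.{u}}

theorem mk_II : #II = 𝔠 := Cardinal.mk_Icc_real (by norm_num)

/-- Cardinality of a cube over a `τ`-sized index type. -/
theorem mk_cube (A : Type u) (hA : #A = τ) (hτ : ℵ₀ ≤ τ) : #(A → II) = 2 ^ τ := by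
  have h1 : #(A → II) = Cardinal.lift.{u} #II ^ Cardinal.lift.{0} #A := Cardinal.mk_arrow A II
  rw [mk_II, Cardinal.lift_continuum, Cardinal.lift_id', hA] at h1
  rw [h1]
  have : (𝔠 : Cardinal.{u}) = 2 ^ (ℵ₀ : Cardinal.{u}) := by
    rw [← Cardinal.two_power_aleph0]
  rw [this, ← Cardinal.power_mul]
  congr 1
  exact Cardinal.aleph0_mul_eq hτ

/-- Sets with no three pairwise-distinct elements have at most 2 elements. -/
theorem mk_le_two_of_no_three {α : Type u} (S : Set α)
    (h : ∀ x ∈ S, ∀ y ∈ S, ∀ z ∈ S, x ≠ y → x ≠ z → y ≠ z → False) : #S ≤ 2 := by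
  by_contra hlt
  push_neg at hlt
  have h3 : (3 : Cardinal.{u}) ≤ #S := by
    have h2 : ((2:ℕ) : Cardinal.{u}) < #S := by exact_mod_cast hlt
    have h4 := Order.succ_le_of_lt h2
    rw [← Cardinal.nat_succ] at h4
    exact_mod_cast h4
  have : #(ULift.{u} (Fin 3)) = 3 := by simp
  rw [← this] at h3
  obtain ⟨f⟩ := Cardinal.le_def _ _ |>.mp h3
  have h01 : f ⟨0⟩ ≠ f ⟨1⟩ := fun h => absurd (f.injective h) (by decide)
  have h02 : f ⟨0⟩ ≠ f ⟨2⟩ := fun h => absurd (f.injective h) (by decide)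
  have h12 : f ⟨1⟩ ≠ f ⟨2⟩ := fun h => absurd (f.injective h) (by decide)
  exact h _ (f ⟨0⟩).2 _ (f ⟨1⟩).2 _ (f ⟨2⟩).2
    (fun h => h01 (Subtype.ext h)) (fun h => h02 (Subtype.ext h))
    (fun h => h12 (Subtype.ext h))

/-- From a set of cardinality `< #α` one can pick a point outside. -/
theorem exists_not_mem_of_mk_lt {α : Type u} (S : Set α) (h : #S < #α) :
    ∃ a : α, a ∉ S := by
  by_contra hc
  push_neg at hc
  have : S = Set.univ := Set.eq_univ_of_forall hc
  rw [this, Cardinal.mk_univ] at h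
  exact lt_irrefl _ h


theorem two_le_tau (hτ : ℵ₀ ≤ τ) : (2 : Cardinal.{u}) ≤ τ := by
  refine le_trans ?_ hτ
  exact_mod_cast (Cardinal.nat_lt_aleph0 2).le

theorem mk_colIx (T : Type u) (hT : #T = τ) (hτ : ℵ₀ ≤ τ) : #(ColIx T) = τ := by
  rw [show (ColIx T) = (T × Bool) from rfl, Cardinal.mk_prod, Cardinal.lift_id', hT]
  simp only [Cardinal.mk_bool, Cardinal.lift_ofNat]
  exact Cardinal.mul_eq_left hτ (two_le_tau hτ) (by norm_num)

/-- The avoidance lemma: against fewer than `2^τ` wedge "priors", there is a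
parameter so that the new wedge differs from every prior at every point except the
basepoint. -/
theorem avoidance (T : Type u) (hT : #T = τ) (hτ : ℵ₀ ≤ τ)
    (J : Type u) (hJ : #J < 2 ^ τ)
    (x₁ : J → Cols T) (v₁ : J → Heights T) (u₁ : J → DIx T → II)
    (x₀ : Cols T) (v₀ : Heights T) :
    ∃ uu : DIx T → II, ∀ j, ∀ x, x ≠ x₀ →
      wedge T x₀ v₀ uu x ≠ wedge T (x₁ j) (v₁ j) (u₁ j) x := by
  classical
  set A : J × ColIx T → DIx T → ℝ := fun p δ =>
    ((v₁ p.1 (p.2, δ)).1 - (v₀ (p.2, δ)).1) / slopeR (v₀ (p.2, δ)).1 with hA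
  set B : J × ColIx T → DIx T → ℝ := fun p δ =>
    (u₁ p.1 δ).1 * slopeR (v₁ p.1 (p.2, δ)).1 / slopeR (v₀ (p.2, δ)).1 with hB
  set BadP : J × ColIx T → Set (Set T) := fun p =>
    {X | ∃ α β : ℝ, ∀ δ, (chi T X δ).1 = α * A p δ + β * B p δ} with hBadP
  set Bad : Set (Set T) := ⋃ p, BadP p with hBad
  have hBadPle : ∀ p, #(BadP p) ≤ 2 := by
    intro p
    apply mk_le_two_of_no_three
    intro X hX Y hY Z hZ hXY hXZ hYZ
    exact span_three T hXY hXZ hYZ hX hY hZ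
  have hJC : #(J × ColIx T) < 2 ^ τ := by
    rw [Cardinal.mk_prod, Cardinal.lift_id', Cardinal.lift_id', mk_colIx T hT hτ]
    apply Cardinal.mul_lt_of_lt (le_trans hτ (le_of_lt (Cardinal.cantor τ))) hJ
    exact Cardinal.cantor τ
  have hBadlt : #Bad < 2 ^ τ := by
    calc #Bad ≤ #(J × ColIx T) * ⨆ p, #(BadP p) := Cardinal.mk_iUnion_le _
      _ ≤ #(J × ColIx T) * 2 := by
          apply mul_le_mul_right
          exact ciSup_le' hBadPle
      _ < 2 ^ τ := by
          apply Cardinal.mul_lt_of_lt (le_trans hτ (le_of_lt (Cardinal.cantor τ))) hJC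
          calc (2 : Cardinal.{u}) ≤ ℵ₀ := le_of_lt (Cardinal.nat_lt_aleph0 2)
            _ ≤ τ := hτ
            _ < 2 ^ τ := Cardinal.cantor τ
  have hset : #(Set T) = 2 ^ τ := by rw [Cardinal.mk_set, hT]
  obtain ⟨X, hX⟩ := exists_not_mem_of_mk_lt Bad (by rw [hset]; exact hBadlt)
  refine ⟨chi T X, fun j x hx heq => ?_⟩
  have hγ : ∃ γ, dI (x γ) (x₀ γ) ≠ 0 := by
    by_contra hc
    push_neg at hc
    apply hx
    funext γ
    exact dI_eq_zero_iff.mp (hc γ)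
  obtain ⟨γ, hγ⟩ := hγ
  obtain ⟨α, β, hαβ⟩ := wedge_eq_span T γ hγ heq
  apply hX
  exact Set.mem_iUnion.mpr ⟨(j, γ), α, β, hαβ⟩


theorem infinite_of_tau (T : Type u) (hT : #T = τ) (hτ : ℵ₀ ≤ τ) : Infinite T := by
  rw [Cardinal.infinite_iff, hT]; exact hτ

theorem mk_DIx (T : Type u) (hT : #T = τ) (hτ : ℵ₀ ≤ τ) : #(DIx T) = τ := by
  have : Infinite T := infinite_of_tau T hT hτ
  rw [show (DIx T) = (Finset T × Finset (Finset T)) from rfl, Cardinal.mk_prod,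
    Cardinal.lift_id', Cardinal.lift_id', Cardinal.mk_finset_of_infinite,
    Cardinal.mk_finset_of_infinite, Cardinal.mk_finset_of_infinite, hT]
  exact Cardinal.mul_eq_self hτ

theorem mk_HIx (T : Type u) (hT : #T = τ) (hτ : ℵ₀ ≤ τ) : #(HIx T) = τ := by
  rw [show (HIx T) = (ColIx T × DIx T) from rfl, Cardinal.mk_prod, Cardinal.lift_id',
    Cardinal.lift_id', mk_colIx T hT hτ, mk_DIx T hT hτ]
  exact Cardinal.mul_eq_self hτ

theorem mk_cols (T : Type u) (hT : #T = τ) (hτ : ℵ₀ ≤ τ) : #(Cols T) = 2 ^ τ :=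
  mk_cube _ (mk_colIx T hT hτ) hτ

theorem mk_heights (T : Type u) (hT : #T = τ) (hτ : ℵ₀ ≤ τ) : #(Heights T) = 2 ^ τ :=
  mk_cube _ (mk_HIx T hT hτ) hτ

theorem mk_MM (T : Type u) (hT : #T = τ) (hτ : ℵ₀ ≤ τ) : #(MM T) = 2 ^ τ := by
  rw [show (MM T) = (Cols T × Heights T) from rfl, Cardinal.mk_prod, Cardinal.lift_id',
    Cardinal.lift_id', mk_cols T hT hτ, mk_heights T hT hτ]
  apply Cardinal.mul_eq_self
  exact le_trans hτ (le_of_lt (Cardinal.cantor τ))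

/-- Given fewer than `2^τ` "partial graphs" in `MM`, some point is uncovered. -/
theorem uncov_exists (T : Type u) (hT : #T = τ) (hτ : ℵ₀ ≤ τ)
    (J : Type u) (hJ : #J < 2 ^ τ) (P : J → Set (MM T))
    (hP : ∀ j, ∀ w ∈ P j, ∀ w' ∈ P j, w.1 = w'.1 → w = w') :
    ∃ m : MM T, ∀ j, m ∉ P j := by
  classical
  set xh : Cols T := fun _ => iZero with hxh
  set U : Set (Heights T) := ⋃ j, {v | (xh, v) ∈ P j} with hU
  have hsub : ∀ j, #({v | (xh, v) ∈ P j} : Set (Heights T)) ≤ 1 := by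
    intro j
    rw [Cardinal.mk_le_one_iff_set_subsingleton]
    intro v hv v' hv'
    have := hP j _ hv _ hv' rfl
    exact congrArg Prod.snd this
  have hUlt : #U < #(Heights T) := by
    rw [mk_heights T hT hτ]
    calc #U ≤ #J * ⨆ j, #({v | (xh, v) ∈ P j} : Set (Heights T)) := Cardinal.mk_iUnion_le _
      _ ≤ #J * 1 := mul_le_mul_right (ciSup_le' hsub) _
      _ = #J := mul_one _
      _ < 2 ^ τ := hJ
  obtain ⟨v, hv⟩ := exists_not_mem_of_mk_lt U hUlt
  exact ⟨(xh, v), fun j hj => hv (Set.mem_iUnion.mpr ⟨j, hj⟩)⟩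


/-- A T3.5 space with a basis of cardinality at most `τ` admits a continuous injection
into the cube `T → II` whenever `#T = τ ≥ ℵ₀`. -/
theorem embed_cube (hτ : ℵ₀ ≤ τ) (T : Type u) (hT : #T = τ)
    (Y : Type u) [TopologicalSpace Y] [T35Space Y]
    (bs : Set (Set Y)) (hbasis : TopologicalSpace.IsTopologicalBasis bs) (hbs : #bs ≤ τ) :
    ∃ j : Y → (T → II), Continuous j ∧ Function.Injective j := by
  classical
  set Good : (↥bs × ↥bs) → Prop := fun q => ∃ φ : Y → II, Continuous φ ∧
    (∀ y ∈ q.1.1, (φ y).1 < 1/2) ∧ (∀ y ∈ q.2.1, 1/2 < (φ y).1) with hGood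
  have hch := fun (q : {q : ↥bs × ↥bs // Good q}) => q.2
  choose φ hφc hφ1 hφ2 using hch
  set Φ : (↥bs × ↥bs) → Y → II := fun q =>
    if h : Good q then φ ⟨q, h⟩ else fun _ => iZero with hΦ
  have hΦcont : ∀ q, Continuous (Φ q) := by
    intro q
    rw [hΦ]
    by_cases h : Good q
    · simp only [dif_pos h]; exact hφc _
    · simp only [dif_neg h]; exact continuous_const
  have hsep : ∀ x y : Y, x ≠ y → ∃ q, (Φ q x).1 ≠ (Φ q y).1 := by
    intro x y hxy
    obtain ⟨f, hf, hfx, hfy⟩ :=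
      CompletelyRegularSpace.completely_regular x {y} isClosed_singleton
        (by simpa using hxy)
    have hfy1 : f y = 1 := hfy rfl
    have hA : IsOpen {z | (f z).1 < 1/3} := by
      have : Continuous fun z => (f z).1 := continuous_subtype_val.comp hf
      exact isOpen_lt this continuous_const
    have hB : IsOpen {z | 2/3 < (f z).1} := by
      have : Continuous fun z => (f z).1 := continuous_subtype_val.comp hf
      exact isOpen_lt continuous_const this
    have hxA : x ∈ {z | (f z).1 < 1/3} := by
      simp only [Set.mem_setOf_eq, hfx]
      norm_num [iZero]
    have hyB : y ∈ {z | 2/3 < (f z).1} := by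
      simp only [Set.mem_setOf_eq, hfy1]
      norm_num
    obtain ⟨U, hU, hxU, hUA⟩ := hbasis.exists_subset_of_mem_open hxA hA
    obtain ⟨V, hV, hyV, hVB⟩ := hbasis.exists_subset_of_mem_open hyB hB
    set q : ↥bs × ↥bs := (⟨U, hU⟩, ⟨V, hV⟩) with hq
    have hGq : Good q := by
      refine ⟨f, hf, fun z hz => ?_, fun z hz => ?_⟩
      · have := hUA hz; simp only [Set.mem_setOf_eq] at this; linarith
      · have := hVB hz; simp only [Set.mem_setOf_eq] at this; linarith
    refine ⟨q, ?_⟩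
    have e : Φ q = φ ⟨q, hGq⟩ := by rw [hΦ]; simp only [dif_pos hGq]
    rw [e]
    have h1 := hφ1 ⟨q, hGq⟩ x hxU
    have h2 := hφ2 ⟨q, hGq⟩ y hyV
    intro hcontra
    rw [hcontra] at h1
    linarith
  -- inject the pairs into `T`
  have hQ : #(↥bs × ↥bs) ≤ #T := by
    have hpr : #(↥bs × ↥bs) = #↥bs * #↥bs := by simp [Cardinal.mk_prod]
    rw [hpr, hT]
    calc #↥bs * #↥bs ≤ τ * τ := mul_le_mul' hbs hbs
      _ = τ := Cardinal.mul_eq_self hτ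
  obtain ⟨ι⟩ := (Cardinal.le_def _ _).mp hQ
  refine ⟨fun y t => if h : ∃ q, ι q = t then Φ h.choose y else iZero, ?_, ?_⟩
  · apply continuous_pi
    intro t
    by_cases h : ∃ q, ι q = t
    · simp only [dif_pos h]; exact (hΦcont _).congr (fun y => rfl) |>.comp continuous_id
    · simp only [dif_neg h]; exact continuous_const
  · intro x y hxy
    by_contra hne
    obtain ⟨q, hq⟩ := hsep x y hne
    have hex : ∃ q', ι q' = ι q := ⟨q, rfl⟩
    have hch : hex.choose = q := ι.injective hex.choose_spec
    have := congrFun hxy (ι q)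
    simp only [dif_pos hex] at this
    rw [hch] at this
    exact hq (congrArg Subtype.val this)


/-- The stage index type: a well order of type `(2^τ).ord`. -/
abbrev StIx (τ : Cardinal.{u}) : Type u := ((2 : Cardinal.{u}) ^ τ).ord.ToType


section Master

variable (T : Type u)

/-- Placement datum: a target point of `MM` and a wedge parameter. -/
abbrev Datum : Type u := MM T × (DIx T → II)

/-- The placement map determined by a basepoint `e` and a datum. -/
noncomputable def phi (e : Cube T) (d : Datum T) (y : Cube T) : MM T :=
  (Fmap T e d.1.1 y, wedge T d.1.1 d.1.2 d.2 (Fmap T e d.1.1 y))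

theorem phi_continuous (e : Cube T) (d : Datum T) : Continuous (phi T e d) := by
  apply Continuous.prodMk
  · exact Fmap_continuous T e d.1.1
  · exact (wedge_continuous T d.1.1 d.1.2 d.2).comp (Fmap_continuous T e d.1.1)

theorem phi_injective (e : Cube T) (d : Datum T) : Function.Injective (phi T e d) := by
  intro y y' h
  exact Fmap_injective T e d.1.1 (congrArg Prod.fst h)

theorem phi_basept (e : Cube T) (d : Datum T) : phi T e d e = d.1 := by
  unfold phi
  rw [Fmap_basept, wedge_basept]

theorem phi_graph (e : Cube T) (d : Datum T) {y y' : Cube T}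
    (h : (phi T e d y).1 = (phi T e d y').1) : phi T e d y = phi T e d y' := by
  have := Fmap_injective T e d.1.1 h
  rw [this]

variable {τ : Cardinal.{u}}

theorem mk_Iio_small (ξ : StIx τ) : #{η : StIx τ // η < ξ} < 2 ^ τ :=
  Cardinal.mk_Iio_ord_toType ξ

variable (hT : #T = τ) (hτ : ℵ₀ ≤ τ)
variable (PI : Type u) (E : PI → Set (Cube T)) (hEne : ∀ i, (E i).Nonempty)
variable (epc : PI ≃ StIx τ) (ept : MM T ≃ StIx τ)

/-- basepoint of a piece -/
noncomputable def bp (i : PI) : Cube T := (hEne i).some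

theorem bp_mem (i : PI) : bp T PI E hEne i ∈ E i := (hEne i).some_mem

/-- image of the placement for stage `η` with datum `d` -/
noncomputable def img (η : StIx τ) (d : Datum T) : Set (MM T) :=
  phi T (bp T PI E hEne (epc.symm η)) d '' E (epc.symm η)

theorem img_graph (η : StIx τ) (d : Datum T) :
    ∀ w ∈ img T PI E hEne epc η d, ∀ w' ∈ img T PI E hEne epc η d,
      w.1 = w'.1 → w = w' := by
  rintro w ⟨y, hy, rfl⟩ w' ⟨y', hy', rfl⟩ h
  exact phi_graph T _ _ h

include hT hτ

/-- Existence of a good placement datum at stage `ξ`, given the prior data. -/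
theorem step_ex (ξ : StIx τ) (prior : ∀ η : StIx τ, η < ξ → Datum T) :
    ∃ d : Datum T,
      (∀ η : StIx τ, ∀ h : η < ξ, d.1 ∉ img T PI E hEne epc η (prior η h)) ∧
      ((∃ η : StIx τ, ∃ h : η < ξ, ept.symm ξ ∈ img T PI E hEne epc η (prior η h)) ∨
        d.1 = ept.symm ξ) ∧
      (∀ η : StIx τ, ∀ h : η < ξ, ∀ x, x ≠ d.1.1 →
        wedge T d.1.1 d.1.2 d.2 x ≠
          wedge T (prior η h).1.1 (prior η h).1.2 (prior η h).2 x) := by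
  classical
  set J := {η : StIx τ // η < ξ} with hJ
  set P : J → Set (MM T) := fun j => img T PI E hEne epc j.1 (prior j.1 j.2) with hP
  have hgr : ∀ j, ∀ w ∈ P j, ∀ w' ∈ P j, w.1 = w'.1 → w = w' :=
    fun j => img_graph T PI E hEne epc j.1 (prior j.1 j.2)
  -- choose the target
  have hz : ∃ z : MM T, (∀ j : J, z ∉ P j) ∧
      ((∃ η : StIx τ, ∃ h : η < ξ, ept.symm ξ ∈ img T PI E hEne epc η (prior η h)) ∨
        z = ept.symm ξ) := by
    by_cases h : ∀ j : J, (ept.symm ξ) ∉ P j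
    · exact ⟨ept.symm ξ, h, Or.inr rfl⟩
    · push_neg at h
      obtain ⟨j, hj⟩ := h
      obtain ⟨m, hm⟩ := uncov_exists T hT hτ J (mk_Iio_small (τ := τ) ξ) P hgr
      exact ⟨m, hm, Or.inl ⟨j.1, j.2, hj⟩⟩
  obtain ⟨z, hz1, hz2⟩ := hz
  obtain ⟨u, hu⟩ := avoidance T hT hτ J (mk_Iio_small (τ := τ) ξ)
    (fun j => (prior j.1 j.2).1.1) (fun j => (prior j.1 j.2).1.2)
    (fun j => (prior j.1 j.2).2) z.1 z.2
  refine ⟨(z, u), fun η h => hz1 ⟨η, h⟩, hz2, fun η h x hx => hu ⟨η, h⟩ x hx⟩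

/-- The single recursion step. -/
noncomputable def step (ξ : StIx τ) (prior : ∀ η : StIx τ, η < ξ → Datum T) : Datum T :=
  Classical.choose (step_ex T hT hτ PI E hEne epc ept ξ prior)

theorem step_spec (ξ : StIx τ) (prior : ∀ η : StIx τ, η < ξ → Datum T) :
    (∀ η : StIx τ, ∀ h : η < ξ,
        (step T hT hτ PI E hEne epc ept ξ prior).1 ∉ img T PI E hEne epc η (prior η h)) ∧
      ((∃ η : StIx τ, ∃ h : η < ξ, ept.symm ξ ∈ img T PI E hEne epc η (prior η h)) ∨
        (step T hT hτ PI E hEne epc ept ξ prior).1 = ept.symm ξ) ∧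
      (∀ η : StIx τ, ∀ h : η < ξ, ∀ x, x ≠ (step T hT hτ PI E hEne epc ept ξ prior).1.1 →
        wedge T (step T hT hτ PI E hEne epc ept ξ prior).1.1
            (step T hT hτ PI E hEne epc ept ξ prior).1.2
            (step T hT hτ PI E hEne epc ept ξ prior).2 x ≠
          wedge T (prior η h).1.1 (prior η h).1.2 (prior η h).2 x) :=
  Classical.choose_spec (step_ex T hT hτ PI E hEne epc ept ξ prior)

/-- The transfinite sequence of placement data. -/
noncomputable def dat : ∀ _ : StIx τ, Datum T :=
  WellFounded.fix (IsWellFounded.wf (r := ((· < ·) : StIx τ → StIx τ → Prop)))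
    (step T hT hτ PI E hEne epc ept)

theorem dat_eq (ξ : StIx τ) :
    dat T hT hτ PI E hEne epc ept ξ =
      step T hT hτ PI E hEne epc ept ξ (fun η _ => dat T hT hτ PI E hEne epc ept η) :=
  WellFounded.fix_eq _ _ _

/-- Image of the stage-`ξ` placement. -/
noncomputable def Img (ξ : StIx τ) : Set (MM T) :=
  img T PI E hEne epc ξ (dat T hT hτ PI E hEne epc ept ξ)

theorem dat_target_uncov (ξ η : StIx τ) (hη : η < ξ) :
    (dat T hT hτ PI E hEne epc ept ξ).1 ∉ Img T hT hτ PI E hEne epc ept η := by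
  rw [dat_eq]
  exact (step_spec T hT hτ PI E hEne epc ept ξ
    (fun η _ => dat T hT hτ PI E hEne epc ept η)).1 η hη

theorem dat_avoid (ξ η : StIx τ) (hη : η < ξ) :
    ∀ x, x ≠ (dat T hT hτ PI E hEne epc ept ξ).1.1 →
      wedge T (dat T hT hτ PI E hEne epc ept ξ).1.1 (dat T hT hτ PI E hEne epc ept ξ).1.2
          (dat T hT hτ PI E hEne epc ept ξ).2 x ≠
        wedge T (dat T hT hτ PI E hEne epc ept η).1.1 (dat T hT hτ PI E hEne epc ept η).1.2
          (dat T hT hτ PI E hEne epc ept η).2 x := by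
  intro x hx
  rw [dat_eq T hT hτ PI E hEne epc ept ξ] at hx ⊢
  exact (step_spec T hT hτ PI E hEne epc ept ξ
    (fun η _ => dat T hT hτ PI E hEne epc ept η)).2.2 η hη x hx

theorem dat_cover (ξ : StIx τ) :
    (∃ η : StIx τ, η < ξ ∧ ept.symm ξ ∈ Img T hT hτ PI E hEne epc ept η) ∨
      (dat T hT hτ PI E hEne epc ept ξ).1 = ept.symm ξ := by
  rcases (step_spec T hT hτ PI E hEne epc ept ξ
      (fun η _ => dat T hT hτ PI E hEne epc ept η)).2.1 with ⟨η, h, hmem⟩ | h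
  · exact Or.inl ⟨η, h, hmem⟩
  · right
    rw [dat_eq]
    exact h

theorem img_disjoint {ξ η : StIx τ} (hη : η < ξ) :
    ∀ w ∈ Img T hT hτ PI E hEne epc ept ξ, w ∉ Img T hT hτ PI E hEne epc ept η := by
  rintro w ⟨y, hy, rfl⟩ hw'
  have hw'' := hw'
  obtain ⟨y', hy', he⟩ := hw''
  set dξ := dat T hT hτ PI E hEne epc ept ξ with hdξ
  set dη := dat T hT hτ PI E hEne epc ept η with hdη
  set eξ := bp T PI E hEne (epc.symm ξ) with heξ
  set eη := bp T PI E hEne (epc.symm η) with heη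
  have hfst : Fmap T eη dη.1.1 y' = Fmap T eξ dξ.1.1 y := congrArg Prod.fst he
  have hsnd : wedge T dη.1.1 dη.1.2 dη.2 (Fmap T eη dη.1.1 y') =
      wedge T dξ.1.1 dξ.1.2 dξ.2 (Fmap T eξ dξ.1.1 y) := congrArg Prod.snd he
  rw [hfst] at hsnd
  by_cases hcase : Fmap T eξ dξ.1.1 y = dξ.1.1
  · have hy_eq : y = eξ := by
      apply Fmap_injective T eξ dξ.1.1
      rw [hcase, Fmap_basept]
    apply dat_target_uncov T hT hτ PI E hEne epc ept ξ η hη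
    have hw : phi T eξ dξ y = dξ.1 := by rw [hy_eq, phi_basept]
    rw [← hdξ, ← hw]
    exact hw'
  · exact dat_avoid T hT hτ PI E hEne epc ept ξ η hη _ hcase hsnd.symm

theorem img_cover (w : MM T) :
    ∃ ξ : StIx τ, w ∈ Img T hT hτ PI E hEne epc ept ξ := by
  rcases dat_cover T hT hτ PI E hEne epc ept (ept w) with ⟨η, _, hmem⟩ | h
  · exact ⟨η, by rwa [Equiv.symm_apply_apply] at hmem⟩
  · refine ⟨ept w, ?_⟩
    rw [Equiv.symm_apply_apply] at h
    refine ⟨bp T PI E hEne (epc.symm (ept w)), bp_mem T PI E hEne _, ?_⟩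
    rw [phi_basept]
    exact h

omit hT hτ in
/-- The master construction: the pieces `E i` can be simultaneously placed into `MM T`
by continuous injections with pairwise disjoint images covering everything. -/
theorem master {τ' : Cardinal.{u}} (hT : #T = τ') (hτ : ℵ₀ ≤ τ')
    (hMM : #(MM T) = 2 ^ τ')
    (PI : Type u) (hPI : #PI = 2 ^ τ')
    (E : PI → Set (Cube T)) (hEne : ∀ i, (E i).Nonempty) :
    ∃ Φ : PI → (Cube T → MM T),
      (∀ i, Continuous (Φ i)) ∧ (∀ i, Function.Injective (Φ i)) ∧
      (∀ i j, i ≠ j → ∀ y ∈ E i, ∀ y' ∈ E j, Φ i y ≠ Φ j y') ∧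
      (∀ w : MM T, ∃ i, ∃ y ∈ E i, Φ i y = w) := by
  have hmkst : #(StIx τ') = 2 ^ τ' := by
    rw [Cardinal.mk_toType, Cardinal.card_ord]
  obtain ⟨epc⟩ := Cardinal.eq.mp (hPI.trans hmkst.symm)
  obtain ⟨ept⟩ := Cardinal.eq.mp (hMM.trans hmkst.symm)
  have hImg : ∀ i : PI, Img T hT hτ PI E hEne epc ept (epc i) =
      phi T (bp T PI E hEne i) (dat T hT hτ PI E hEne epc ept (epc i)) '' E i := by
    intro i
    unfold Img img
    rw [Equiv.symm_apply_apply]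
  refine ⟨fun i => phi T (bp T PI E hEne i) (dat T hT hτ PI E hEne epc ept (epc i)),
    fun i => phi_continuous T _ _, fun i => phi_injective T _ _, ?_, ?_⟩
  · intro i j hij y hy y' hy' heq
    beta_reduce at heq
    have hs : epc i ≠ epc j := fun h => hij (epc.injective h)
    rcases lt_or_gt_of_ne hs with hlt | hlt
    · -- epc i < epc j
      apply img_disjoint T hT hτ PI E hEne epc ept hlt
        (phi T (bp T PI E hEne j) (dat T hT hτ PI E hEne epc ept (epc j)) y')
      · rw [hImg j]; exact ⟨y', hy', rfl⟩
      · rw [hImg i, ← heq]; exact ⟨y, hy, rfl⟩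
    · apply img_disjoint T hT hτ PI E hEne epc ept hlt
        (phi T (bp T PI E hEne i) (dat T hT hτ PI E hEne epc ept (epc i)) y)
      · rw [hImg i]; exact ⟨y, hy, rfl⟩
      · rw [hImg j, heq]; exact ⟨y', hy', rfl⟩
  · intro w
    obtain ⟨ξ, hw⟩ := img_cover T hT hτ PI E hEne epc ept w
    refine ⟨epc.symm ξ, ?_⟩
    have : Img T hT hτ PI E hEne epc ept ξ =
        phi T (bp T PI E hEne (epc.symm ξ))
          (dat T hT hτ PI E hEne epc ept (epc (epc.symm ξ))) '' E (epc.symm ξ) := by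
      rw [← hImg (epc.symm ξ), Equiv.apply_symm_apply]
    rw [this] at hw
    obtain ⟨y, hy, hyw⟩ := hw
    exact ⟨y, hy, hyw⟩

end Master

/-- The homeomorphism from the master space to the standard Tychonoff cube. -/
noncomputable def mmHomeo (T : Type u) (hT : #T = τ) (hτ : ℵ₀ ≤ τ) (T' : Type u)
    (hT' : #T' = τ) : MM T ≃ₜ (T' → II) := by
  have hsum : #(ColIx T ⊕ HIx T) = #T' := by
    simp only [Cardinal.mk_sum, Cardinal.lift_id]
    rw [mk_colIx T hT hτ, mk_HIx T hT hτ, hT', Cardinal.add_eq_self hτ]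
  exact (Homeomorph.sumArrowHomeomorphProdArrow.symm.trans
    (Homeomorph.piCongrLeft (Y := fun _ => II) (Cardinal.eq.mp hsum).some))


end Stmt11

open Stmt11 in
/-- a topological sum of `2^τ` many nonempty Hausdorff spaces of
`i`-weight at most `τ` becomes, after removing any set of fewer than `2^τ` points, a
space condensing onto the Tychonoff cube `[0,1]^τ`; in particular the sum is
`a_{<2^τ}`-subcompact. -/
theorem stmt_11 (τ : Cardinal.{u}) (hτ : ℵ₀ ≤ τ)
    (Λ : Type u) (hΛ : #Λ = 2 ^ τ)
    (Xa : Λ → Type u) [∀ a, TopologicalSpace (Xa a)] [∀ a, T2Space (Xa a)]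
    (hne : ∀ a, Nonempty (Xa a))
    (hiw : ∀ a, ∃ (Y : Type u) (_ : TopologicalSpace Y), T35Space Y ∧
      (∃ bs : Set (Set Y), TopologicalSpace.IsTopologicalBasis bs ∧ #bs ≤ τ) ∧
      ∃ f : Xa a → Y, Continuous f ∧ Function.Bijective f) :
    ∀ S : Set (Σ a, Xa a), #S < 2 ^ τ →
      (∃ f : ↥(Sᶜ) → (Quotient.out τ → ↥(Set.Icc (0 : ℝ) 1)),
        Continuous f ∧ Function.Bijective f) ∧
      Subcompact ↥(Sᶜ) := by
  classical
  intro S hS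
  have hT : #(Quotient.out τ) = τ := Cardinal.mk_out τ
  set T := Quotient.out τ with hTdef
  -- continuous injections of the summands into the cube
  have hGex : ∀ a, ∃ g : Xa a → Cube T, Continuous g ∧ Function.Injective g := by
    intro a
    obtain ⟨Y, tY, h35, ⟨bs, hbs, hbscard⟩, f, hfc, hfb⟩ := hiw a
    obtain ⟨j, hjc, hji⟩ := @embed_cube τ hτ T hT Y tY h35 bs hbs hbscard
    exact ⟨j ∘ f, hjc.comp hfc, hji.comp hfb.injective⟩
  choose G hGc hGi using hGex
  -- the indices of nonempty pieces
  have hPI : #{a : Λ // ∃ x : Xa a, (⟨a, x⟩ : Σ a, Xa a) ∉ S} = 2 ^ τ := by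
    apply le_antisymm
    · rw [← hΛ]; exact Cardinal.mk_subtype_le _
    · by_contra hlt
      push_neg at hlt
      have h1 : #({a : Λ | ∃ x : Xa a, (⟨a, x⟩ : Σ a, Xa a) ∉ S}ᶜ : Set Λ) ≤ #S := by
        apply Cardinal.mk_le_of_injective
          (f := fun b => (⟨⟨b.1, (hne b.1).some⟩, by
            have hb := b.2
            simp only [Set.mem_compl_iff, Set.mem_setOf_eq, not_exists, not_not] at hb
            exact hb _⟩ : S))
        intro b b' hbb
        apply Subtype.ext
        have := congrArg (fun s : S => (s : Σ a, Xa a).1) hbb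
        exact this
      have h2 := Cardinal.mk_sum_compl {a : Λ | ∃ x : Xa a, (⟨a, x⟩ : Σ a, Xa a) ∉ S}
      rw [hΛ] at h2
      have h3 : (2 : Cardinal.{u}) ^ τ ≤
          #{a : Λ // ∃ x : Xa a, (⟨a, x⟩ : Σ a, Xa a) ∉ S} +
          #({a : Λ | ∃ x : Xa a, (⟨a, x⟩ : Σ a, Xa a) ∉ S}ᶜ : Set Λ) := h2.symm.le
      have h4 : #{a : Λ // ∃ x : Xa a, (⟨a, x⟩ : Σ a, Xa a) ∉ S} +
          #({a : Λ | ∃ x : Xa a, (⟨a, x⟩ : Σ a, Xa a) ∉ S}ᶜ : Set Λ) < 2 ^ τ := by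
        apply Cardinal.add_lt_of_lt
          (le_trans hτ (le_of_lt (Cardinal.cantor τ))) hlt (lt_of_le_of_lt h1 hS)
      exact absurd (lt_of_le_of_lt h3 h4) (lt_irrefl _)
  -- piece sets inside the cube
  set E : {a : Λ // ∃ x : Xa a, (⟨a, x⟩ : Σ a, Xa a) ∉ S} → Set (Cube T) :=
    fun i => G i.1 '' {x : Xa i.1 | (⟨i.1, x⟩ : Σ a, Xa a) ∉ S} with hEdef
  have hEne : ∀ i, (E i).Nonempty := by
    rintro ⟨a, x, hx⟩
    exact ⟨G a x, ⟨x, hx, rfl⟩⟩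
  obtain ⟨Φ, hΦc, hΦi, hΦd, hΦcov⟩ := master T hT hτ (mk_MM T hT hτ) _ hPI E hEne
  set hom := mmHomeo T hT hτ T hT with hhom
  -- total map on the sigma type
  set FF : (Σ a, Xa a) → MM T := fun s =>
    if h : ∃ x : Xa s.1, (⟨s.1, x⟩ : Σ a, Xa a) ∉ S then Φ ⟨s.1, h⟩ (G s.1 s.2)
    else (fun _ => iZero, fun _ => iZero) with hFF
  have hFFc : Continuous FF := by
    apply continuous_sigma
    intro a
    by_cases h : ∃ x : Xa a, (⟨a, x⟩ : Σ a, Xa a) ∉ S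
    · have he : (fun x : Xa a => FF ⟨a, x⟩) = fun x => Φ ⟨a, h⟩ (G a x) := by
        funext x
        simp only [hFF, dif_pos h]
      rw [he]
      exact (hΦc _).comp (hGc a)
    · have he : (fun x : Xa a => FF ⟨a, x⟩) =
          fun _ => ((fun _ => iZero, fun _ => iZero) : MM T) := by
        funext x
        simp only [hFF, dif_neg h]
      rw [he]
      exact continuous_const
  have key : ∃ f : ↥(Sᶜ) → (T → II), Continuous f ∧ Function.Bijective f := by
    refine ⟨fun q => hom (FF q.1), (hom.continuous).comp (hFFc.comp continuous_subtype_val),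
      ?_, ?_⟩
    · -- injective
      rintro ⟨⟨a, x⟩, hq⟩ ⟨⟨a', x'⟩, hq'⟩ heq
      simp only at heq
      have heq2 : FF ⟨a, x⟩ = FF ⟨a', x'⟩ := hom.injective heq
      have hqS : (⟨a, x⟩ : Σ a, Xa a) ∉ S := hq
      have hq'S : (⟨a', x'⟩ : Σ a, Xa a) ∉ S := hq'
      have hCa : ∃ z : Xa a, (⟨a, z⟩ : Σ a, Xa a) ∉ S := ⟨x, hqS⟩
      have hCa' : ∃ z : Xa a', (⟨a', z⟩ : Σ a, Xa a) ∉ S := ⟨x', hq'S⟩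
      rw [hFF] at heq2
      simp only [dif_pos hCa, dif_pos hCa'] at heq2
      by_cases haa : a = a'
      · subst haa
        have : G a x = G a x' := hΦi ⟨a, hCa⟩ heq2
        have hxx : x = x' := hGi a this
        subst hxx
        rfl
      · exfalso
        apply hΦd ⟨a, hCa⟩ ⟨a', hCa'⟩ (fun hc => haa (congrArg Subtype.val hc))
          (G a x) ⟨x, hqS, rfl⟩ (G a' x') ⟨x', hq'S, rfl⟩
        exact heq2
    · -- surjective
      intro w'
      obtain ⟨i, y, hy, hw⟩ := hΦcov (hom.symm w')
      obtain ⟨x, hx, rfl⟩ := hy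
      have hxS : (⟨i.1, x⟩ : Σ a, Xa a) ∈ Sᶜ := hx
      refine ⟨⟨⟨i.1, x⟩, hxS⟩, ?_⟩
      simp only
      have hCi : ∃ z : Xa i.1, (⟨i.1, z⟩ : Σ a, Xa a) ∉ S := ⟨x, hx⟩
      have he1 : FF ⟨i.1, x⟩ = Φ ⟨i.1, hCi⟩ (G i.1 x) := by
        rw [hFF]; simp only [dif_pos hCi]
      have hieq : (⟨i.1, hCi⟩ : {a : Λ // ∃ z : Xa a, (⟨a, z⟩ : Σ a, Xa a) ∉ S}) = i :=
        Subtype.ext rfl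
      rw [he1, hieq, hw]
      exact hom.apply_symm_apply w'
  refine ⟨key, ?_⟩
  obtain ⟨f, hfc, hfb⟩ := key
  exact ⟨(T → II), inferInstance, inferInstance, inferInstance, f, hfc, hfb⟩
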